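/- If two systems x(n+1)=A(n)x(n) and y(n+1)=B(n)y(n) are dynamically equivalent via a Lyapunov transformation T (i.e. B(n) = T(n+1)⁻¹A(n)T(n) with T, T⁻¹ bounded), then for every subspace L ⊆ ℝ^d the Bohl exponents satisfy β̄_A(L) = β̄_B(T(0)⁻¹L) and β̲_A(L) = β̲_B(T(0)⁻¹L). -/

import Mathlib

open Filter Topology

noncomputable section

abbrev Euc (d : ℕ) := EuclideanSpace ℝ (Fin d)

/-- forward product `A(m+k-1) ⋯ A(m)` -/
def fwd {d : ℕ} (A : ℕ → (Euc d →L[ℝ] Euc d)) (m : ℕ) : ℕ → (Euc d →L[ℝ] Euc d)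
  | 0 => 1
  | k + 1 => A (m + k) * fwd A m k

/-- backward product `Ainv(n) ⋯ Ainv(n+k-1)` -/
def bwd {d : ℕ} (Ainv : ℕ → (Euc d →L[ℝ] Euc d)) (n : ℕ) : ℕ → (Euc d →L[ℝ] Euc d)
  | 0 => 1
  | k + 1 => bwd Ainv n k * Ainv (n + k)

/-- transition matrix Φ_A(n,m) -/
def Phi {d : ℕ} (A Ainv : ℕ → (Euc d →L[ℝ] Euc d)) (n m : ℕ) : Euc d →L[ℝ] Euc d :=
  if m ≤ n then fwd A m (n - m) else bwd Ainv n (m - n)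

/-- A is a bounded sequence of invertible maps with bounded inverse sequence Ainv -/
def IsLyapunov {d : ℕ} (A Ainv : ℕ → (Euc d →L[ℝ] Euc d)) : Prop :=
  (∀ n, A n * Ainv n = 1) ∧ (∀ n, Ainv n * A n = 1) ∧
    BddAbove (Set.range fun n => ‖A n‖) ∧ BddAbove (Set.range fun n => ‖Ainv n‖)

/-- `‖A‖_∞ = sup_n ‖A(n)‖` -/
def supNorm {d : ℕ} (A : ℕ → (Euc d →L[ℝ] Euc d)) : ℝ := ⨆ n, ‖A n‖

/-- solution `x(n,x₀) = Φ_A(n,0) x₀` -/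
def sol {d : ℕ} (A : ℕ → (Euc d →L[ℝ] Euc d)) (n : ℕ) (x₀ : Euc d) : Euc d :=
  fwd A 0 n x₀

/-- `λ(n,m) = (1/(n-m)) ln (‖x(n,x₀)‖ / ‖x(m,x₀)‖)` -/
def lam {d : ℕ} (A : ℕ → (Euc d →L[ℝ] Euc d)) (n m : ℕ) (x₀ : Euc d) : ℝ :=
  Real.log (‖sol A n x₀‖ / ‖sol A m x₀‖) / ((n : ℝ) - (m : ℝ))

/-- upper Bohl exponent of a subspace -/
def upperBohl {d : ℕ} (A : ℕ → (Euc d →L[ℝ] Euc d)) (L : Set (Euc d)) : ℝ :=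
  ⨅ N : ℕ, sSup {r | ∃ n m : ℕ, ∃ x₀ : Euc d,
    N < n - m ∧ x₀ ∈ L ∧ x₀ ≠ 0 ∧ r = lam A n m x₀}

/-- lower Bohl exponent of a subspace -/
def lowerBohl {d : ℕ} (A : ℕ → (Euc d →L[ℝ] Euc d)) (L : Set (Euc d)) : ℝ :=
  ⨆ N : ℕ, sInf {r | ∃ n m : ℕ, ∃ x₀ : Euc d,
    N < n - m ∧ x₀ ∈ L ∧ x₀ ≠ 0 ∧ r = lam A n m x₀}

/-- upper Bohl exponent of a vector -/
def upperBohlVec {d : ℕ} (A : ℕ → (Euc d →L[ℝ] Euc d)) (x₀ : Euc d) : ℝ :=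
  ⨅ N : ℕ, sSup {r | ∃ n m : ℕ, N < n - m ∧ r = lam A n m x₀}

/-- lower Bohl exponent of a vector -/
def lowerBohlVec {d : ℕ} (A : ℕ → (Euc d →L[ℝ] Euc d)) (x₀ : Euc d) : ℝ :=
  ⨆ N : ℕ, sInf {r | ∃ n m : ℕ, N < n - m ∧ r = lam A n m x₀}

/-- Bohl spectrum -/
def bohlSpectrum {d : ℕ} (A : ℕ → (Euc d →L[ℝ] Euc d)) : Set ℝ :=
  {γ | ∃ x₀ : Euc d, x₀ ≠ 0 ∧ γ ∈ Set.Icc (lowerBohlVec A x₀) (upperBohlVec A x₀)}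

/-- the γ-shifted system `e^{-γ} A` -/
def shift {d : ℕ} (A : ℕ → (Euc d →L[ℝ] Euc d)) (γ : ℝ) : ℕ → (Euc d →L[ℝ] Euc d) :=
  fun n => Real.exp (-γ) • A n

/-- Bohl dichotomy on a given pair of subspaces -/
def HasBohlDichotomyOn {d : ℕ} (A : ℕ → (Euc d →L[ℝ] Euc d))
    (L₁ L₂ : Submodule ℝ (Euc d)) : Prop :=
  ∃ α : ℝ, 0 < α ∧ ∃ C₁ C₂ : Euc d → ℝ, (∀ x, 0 < C₁ x) ∧ (∀ x, 0 < C₂ x) ∧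
    (∀ x₀ ∈ L₁, ∀ m n : ℕ, m ≤ n →
      ‖sol A n x₀‖ ≤ C₁ x₀ * Real.exp (-α * ((n : ℝ) - (m : ℝ))) * ‖sol A m x₀‖) ∧
    (∀ x₀ ∈ L₂, ∀ m n : ℕ, m ≤ n →
      C₂ x₀ * Real.exp (α * ((n : ℝ) - (m : ℝ))) * ‖sol A m x₀‖ ≤ ‖sol A n x₀‖)

/-- Bohl dichotomy -/
def HasBohlDichotomy {d : ℕ} (A : ℕ → (Euc d →L[ℝ] Euc d)) : Prop :=
  ∃ L₁ L₂ : Submodule ℝ (Euc d), IsCompl L₁ L₂ ∧ HasBohlDichotomyOn A L₁ L₂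

/-- Bohl dichotomy spectrum -/
def bdSpectrum {d : ℕ} (A : ℕ → (Euc d →L[ℝ] Euc d)) : Set ℝ :=
  {γ | ¬ HasBohlDichotomy (shift A γ)}


namespace Stmt19

variable {d : ℕ}

lemma cancel_apply (f g : Euc d →L[ℝ] Euc d) (h : f * g = 1) (x : Euc d) : f (g x) = x := by
  have h2 := congrArg (fun h : Euc d →L[ℝ] Euc d => h x) h
  simpa [ContinuousLinearMap.mul_apply, ContinuousLinearMap.one_apply] using h2

lemma fwd_add (A : ℕ → (Euc d →L[ℝ] Euc d)) (m k : ℕ) :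
    fwd A 0 (m + k) = fwd A m k * fwd A 0 m := by
  induction k with
  | zero => simp [fwd]
  | succ k ih =>
      rw [← Nat.add_assoc,
        show fwd A 0 (m + k + 1) = A (0 + (m + k)) * fwd A 0 (m + k) from rfl,
        Nat.zero_add, ih,
        show fwd A m (k + 1) = A (m + k) * fwd A m k from rfl, mul_assoc]

lemma bwd_mul_fwd (A Ainv : ℕ → (Euc d →L[ℝ] Euc d)) (h : ∀ n, Ainv n * A n = 1)
    (m k : ℕ) : bwd Ainv m k * fwd A m k = 1 := by
  induction k with
  | zero => simp [fwd, bwd]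
  | succ k ih =>
      show (bwd Ainv m k * Ainv (m + k)) * (A (m + k) * fwd A m k) = 1
      rw [mul_assoc, ← mul_assoc (Ainv (m + k)), h, one_mul, ih]

lemma norm_fwd_le (A : ℕ → (Euc d →L[ℝ] Euc d)) {c : ℝ} (hc : ∀ n, ‖A n‖ ≤ c)
    (hc1 : 1 ≤ c) (m k : ℕ) : ‖fwd A m k‖ ≤ c ^ k := by
  induction k with
  | zero =>
      show ‖(1 : Euc d →L[ℝ] Euc d)‖ ≤ c ^ 0
      rw [pow_zero]
      exact ContinuousLinearMap.norm_id_le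
  | succ k ih =>
      calc ‖A (m + k) * fwd A m k‖ ≤ ‖A (m + k)‖ * ‖fwd A m k‖ := norm_mul_le _ _
        _ ≤ c * c ^ k := mul_le_mul (hc _) ih (norm_nonneg _) (by linarith)
        _ = c ^ (k + 1) := by ring

lemma norm_bwd_le (Ainv : ℕ → (Euc d →L[ℝ] Euc d)) {c : ℝ} (hc : ∀ n, ‖Ainv n‖ ≤ c)
    (hc1 : 1 ≤ c) (m k : ℕ) : ‖bwd Ainv m k‖ ≤ c ^ k := by
  induction k with
  | zero =>
      show ‖(1 : Euc d →L[ℝ] Euc d)‖ ≤ c ^ 0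
      rw [pow_zero]
      exact ContinuousLinearMap.norm_id_le
  | succ k ih =>
      calc ‖bwd Ainv m k * Ainv (m + k)‖ ≤ ‖bwd Ainv m k‖ * ‖Ainv (m + k)‖ := norm_mul_le _ _
        _ ≤ c ^ k * c := mul_le_mul ih (hc _) (norm_nonneg _) (by positivity)
        _ = c ^ (k + 1) := by ring

lemma sol_shift (A : ℕ → (Euc d →L[ℝ] Euc d)) {m n : ℕ} (h : m ≤ n) (x₀ : Euc d) :
    sol A n x₀ = fwd A m (n - m) (sol A m x₀) := by
  have h1 : fwd A 0 n = fwd A m (n - m) * fwd A 0 m := by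
    have h2 := fwd_add A m (n - m)
    rwa [Nat.add_sub_cancel' h] at h2
  simp [sol, h1, ContinuousLinearMap.mul_apply]

lemma sol_ne_zero (A Ainv : ℕ → (Euc d →L[ℝ] Euc d)) (hinv : ∀ n, Ainv n * A n = 1)
    {x₀ : Euc d} (hx : x₀ ≠ 0) (n : ℕ) : sol A n x₀ ≠ 0 := by
  intro h0
  apply hx
  have h1 := bwd_mul_fwd A Ainv hinv 0 n
  have h2 : bwd Ainv 0 n (fwd A 0 n x₀) = x₀ := cancel_apply _ _ h1 x₀
  rw [← h2, show fwd A 0 n x₀ = sol A n x₀ from rfl, h0, map_zero]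

lemma lam_bound (A Ainv : ℕ → (Euc d →L[ℝ] Euc d)) {cA cI : ℝ}
    (hAc : ∀ n, ‖A n‖ ≤ cA) (hIc : ∀ n, ‖Ainv n‖ ≤ cI) (hA1 : 1 ≤ cA) (hI1 : 1 ≤ cI)
    (hinv : ∀ n, Ainv n * A n = 1) {x₀ : Euc d} (hx : x₀ ≠ 0) {m n : ℕ} (hmn : m < n) :
    -Real.log cI ≤ lam A n m x₀ ∧ lam A n m x₀ ≤ Real.log cA := by
  set k := n - m with hk
  have hk0 : 0 < k := by omega
  have hcast : (n : ℝ) - (m : ℝ) = (k : ℝ) := by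
    rw [hk, Nat.cast_sub hmn.le]
  have hkR : (0 : ℝ) < (k : ℝ) := by exact_mod_cast hk0
  have hp : (0 : ℝ) < ‖sol A n x₀‖ := norm_pos_iff.mpr (sol_ne_zero A Ainv hinv hx n)
  have hq : (0 : ℝ) < ‖sol A m x₀‖ := norm_pos_iff.mpr (sol_ne_zero A Ainv hinv hx m)
  have hvk : sol A n x₀ = fwd A m k (sol A m x₀) := sol_shift A hmn.le x₀
  have h1 : ‖sol A n x₀‖ ≤ cA ^ k * ‖sol A m x₀‖ := by
    conv_lhs => rw [hvk]
    calc ‖fwd A m k (sol A m x₀)‖ ≤ ‖fwd A m k‖ * ‖sol A m x₀‖ := (fwd A m k).le_opNorm _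
      _ ≤ cA ^ k * ‖sol A m x₀‖ :=
          mul_le_mul_of_nonneg_right (norm_fwd_le A hAc hA1 m k) hq.le
  have h2 : ‖sol A m x₀‖ ≤ cI ^ k * ‖sol A n x₀‖ := by
    have h3 : bwd Ainv m k (sol A n x₀) = sol A m x₀ := by
      rw [hvk]; exact cancel_apply _ _ (bwd_mul_fwd A Ainv hinv m k) _
    rw [← h3]
    calc ‖bwd Ainv m k (sol A n x₀)‖ ≤ ‖bwd Ainv m k‖ * ‖sol A n x₀‖ :=
          (bwd Ainv m k).le_opNorm _
      _ ≤ cI ^ k * ‖sol A n x₀‖ :=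
          mul_le_mul_of_nonneg_right (norm_bwd_le Ainv hIc hI1 m k) hp.le
  have hcI0 : (0 : ℝ) < cI := by linarith
  unfold lam
  rw [hcast]
  constructor
  · rw [le_div_iff₀ hkR]
    have hineq : (cI ^ k)⁻¹ ≤ ‖sol A n x₀‖ / ‖sol A m x₀‖ := by
      rw [le_div_iff₀ hq]
      calc (cI ^ k)⁻¹ * ‖sol A m x₀‖ ≤ (cI ^ k)⁻¹ * (cI ^ k * ‖sol A n x₀‖) :=
            mul_le_mul_of_nonneg_left h2 (by positivity)
        _ = ‖sol A n x₀‖ := by field_simp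
    have hlog := Real.log_le_log (by positivity) hineq
    rw [Real.log_inv, Real.log_pow] at hlog
    linarith
  · rw [div_le_iff₀ hkR]
    have hineq : ‖sol A n x₀‖ / ‖sol A m x₀‖ ≤ cA ^ k := by
      rw [div_le_iff₀ hq]; exact h1
    have hlog := Real.log_le_log (div_pos hp hq) hineq
    rw [Real.log_pow] at hlog
    linarith

lemma log_div_le' {a b p q c₁ c₂ : ℝ} (ha : 0 < a) (hb : 0 < b) (hp : 0 < p) (hq : 0 < q)
    (hc₁ : 0 < c₁) (hc₂ : 0 < c₂) (h1 : a ≤ c₁ * p) (h2 : q ≤ c₂ * b) :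
    Real.log (a / b) ≤ Real.log (c₁ * c₂) + Real.log (p / q) := by
  have key : a / b ≤ c₁ * c₂ * p / q := by
    rw [div_le_div_iff₀ hb hq]
    nlinarith [mul_le_mul h1 h2 hq.le (by positivity : (0 : ℝ) ≤ c₁ * p)]
  calc Real.log (a / b) ≤ Real.log (c₁ * c₂ * p / q) := Real.log_le_log (by positivity) key
    _ = Real.log (c₁ * c₂) + Real.log (p / q) := by
        rw [mul_div_assoc, Real.log_mul (by positivity) (by positivity)]

lemma fwd_conj (A B T Tinv : ℕ → (Euc d →L[ℝ] Euc d))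
    (hTid : ∀ n, T n * Tinv n = 1) (hTid' : ∀ n, Tinv n * T n = 1)
    (heq : ∀ n, B n = Tinv (n + 1) * A n * T n) (n : ℕ) :
    fwd B 0 n = Tinv n * fwd A 0 n * T 0 := by
  induction n with
  | zero =>
      show (1 : Euc d →L[ℝ] Euc d) = Tinv 0 * 1 * T 0
      rw [mul_one, hTid' 0]
  | succ k ih =>
      rw [show fwd B 0 (k + 1) = B (0 + k) * fwd B 0 k from rfl, Nat.zero_add, ih, heq k,
        show fwd A 0 (k + 1) = A (0 + k) * fwd A 0 k from rfl, Nat.zero_add]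
      simp only [mul_assoc]
      rw [← mul_assoc (T k) (Tinv k), hTid k, one_mul]

lemma sol_conj (A B T Tinv : ℕ → (Euc d →L[ℝ] Euc d))
    (hTid : ∀ n, T n * Tinv n = 1) (hTid' : ∀ n, Tinv n * T n = 1)
    (heq : ∀ n, B n = Tinv (n + 1) * A n * T n) (n : ℕ) (x₀ : Euc d) :
    sol B n (Tinv 0 x₀) = Tinv n (sol A n x₀) := by
  have hT0 : T 0 (Tinv 0 x₀) = x₀ := cancel_apply _ _ (hTid 0) x₀
  show fwd B 0 n (Tinv 0 x₀) = Tinv n (fwd A 0 n x₀)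
  rw [fwd_conj A B T Tinv hTid hTid' heq n]
  simp [ContinuousLinearMap.mul_apply, hT0]

lemma lam_compare (A Ainv B Binv T Tinv : ℕ → (Euc d →L[ℝ] Euc d))
    (hAinv : ∀ n, Ainv n * A n = 1) (hBinv : ∀ n, Binv n * B n = 1)
    (hTid : ∀ n, T n * Tinv n = 1) (hTid' : ∀ n, Tinv n * T n = 1)
    {cT cI : ℝ} (hTc : ∀ n, ‖T n‖ ≤ cT) (hIc : ∀ n, ‖Tinv n‖ ≤ cI)
    (hcT : 0 < cT) (hcI : 0 < cI)
    (heq : ∀ n, B n = Tinv (n + 1) * A n * T n)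
    {x₀ : Euc d} (hx : x₀ ≠ 0) {m n : ℕ} (hmn : m < n) :
    lam A n m x₀ - Real.log (cT * cI) / ((n : ℝ) - (m : ℝ)) ≤ lam B n m (Tinv 0 x₀) ∧
    lam B n m (Tinv 0 x₀) ≤ lam A n m x₀ + Real.log (cT * cI) / ((n : ℝ) - (m : ℝ)) := by
  have hy : Tinv 0 x₀ ≠ 0 := by
    intro h
    apply hx
    have hT0 : T 0 (Tinv 0 x₀) = x₀ := cancel_apply _ _ (hTid 0) x₀
    rw [← hT0, h, map_zero]
  have hkR : (0 : ℝ) < (n : ℝ) - (m : ℝ) := by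
    have : (m : ℝ) < (n : ℝ) := by exact_mod_cast hmn
    linarith
  have hp : (0 : ℝ) < ‖sol A n x₀‖ := norm_pos_iff.mpr (sol_ne_zero A Ainv hAinv hx n)
  have hq : (0 : ℝ) < ‖sol A m x₀‖ := norm_pos_iff.mpr (sol_ne_zero A Ainv hAinv hx m)
  have ha : (0 : ℝ) < ‖sol B n (Tinv 0 x₀)‖ :=
    norm_pos_iff.mpr (sol_ne_zero B Binv hBinv hy n)
  have hb : (0 : ℝ) < ‖sol B m (Tinv 0 x₀)‖ :=
    norm_pos_iff.mpr (sol_ne_zero B Binv hBinv hy m)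
  have hsc : ∀ j, sol B j (Tinv 0 x₀) = Tinv j (sol A j x₀) :=
    fun j => sol_conj A B T Tinv hTid hTid' heq j x₀
  have hTback : ∀ j, T j (sol B j (Tinv 0 x₀)) = sol A j x₀ := by
    intro j
    rw [hsc j]; exact cancel_apply _ _ (hTid j) _
  have h1 : ‖sol B n (Tinv 0 x₀)‖ ≤ cI * ‖sol A n x₀‖ := by
    rw [hsc n]
    calc ‖Tinv n (sol A n x₀)‖ ≤ ‖Tinv n‖ * ‖sol A n x₀‖ := (Tinv n).le_opNorm _
      _ ≤ cI * ‖sol A n x₀‖ := mul_le_mul_of_nonneg_right (hIc n) hp.le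
  have h2 : ‖sol A m x₀‖ ≤ cT * ‖sol B m (Tinv 0 x₀)‖ := by
    conv_lhs => rw [← hTback m]
    calc ‖T m (sol B m (Tinv 0 x₀))‖ ≤ ‖T m‖ * ‖sol B m (Tinv 0 x₀)‖ := (T m).le_opNorm _
      _ ≤ cT * ‖sol B m (Tinv 0 x₀)‖ := mul_le_mul_of_nonneg_right (hTc m) hb.le
  have h3 : ‖sol A n x₀‖ ≤ cT * ‖sol B n (Tinv 0 x₀)‖ := by
    conv_lhs => rw [← hTback n]
    calc ‖T n (sol B n (Tinv 0 x₀))‖ ≤ ‖T n‖ * ‖sol B n (Tinv 0 x₀)‖ := (T n).le_opNorm _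
      _ ≤ cT * ‖sol B n (Tinv 0 x₀)‖ := mul_le_mul_of_nonneg_right (hTc n) ha.le
  have h4 : ‖sol B m (Tinv 0 x₀)‖ ≤ cI * ‖sol A m x₀‖ := by
    rw [hsc m]
    calc ‖Tinv m (sol A m x₀)‖ ≤ ‖Tinv m‖ * ‖sol A m x₀‖ := (Tinv m).le_opNorm _
      _ ≤ cI * ‖sol A m x₀‖ := mul_le_mul_of_nonneg_right (hIc m) hq.le
  have hu1 : Real.log (‖sol B n (Tinv 0 x₀)‖ / ‖sol B m (Tinv 0 x₀)‖) ≤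
      Real.log (cT * cI) + Real.log (‖sol A n x₀‖ / ‖sol A m x₀‖) := by
    have := log_div_le' ha hb hp hq hcI hcT h1 h2
    rwa [mul_comm cI cT] at this
  have hu2 : Real.log (‖sol A n x₀‖ / ‖sol A m x₀‖) ≤
      Real.log (cT * cI) + Real.log (‖sol B n (Tinv 0 x₀)‖ / ‖sol B m (Tinv 0 x₀)‖) :=
    log_div_le' hp hq ha hb hcT hcI h3 h4
  unfold lam
  constructor
  · rw [div_sub_div_same]
    exact (div_le_div_iff_of_pos_right hkR).mpr (by linarith)
  · rw [← add_div]
    exact (div_le_div_iff_of_pos_right hkR).mpr (by linarith)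

def bset (A : ℕ → (Euc d →L[ℝ] Euc d)) (L : Set (Euc d)) (N : ℕ) : Set ℝ :=
  {r | ∃ n m : ℕ, ∃ x₀ : Euc d, N < n - m ∧ x₀ ∈ L ∧ x₀ ≠ 0 ∧ r = lam A n m x₀}

lemma upperBohl_eq (A : ℕ → (Euc d →L[ℝ] Euc d)) (L : Set (Euc d)) :
    upperBohl A L = ⨅ N : ℕ, sSup (bset A L N) := rfl

lemma lowerBohl_eq (A : ℕ → (Euc d →L[ℝ] Euc d)) (L : Set (Euc d)) :
    lowerBohl A L = ⨆ N : ℕ, sInf (bset A L N) := rfl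

lemma bset_anti (A : ℕ → (Euc d →L[ℝ] Euc d)) (L : Set (Euc d)) {N N' : ℕ} (h : N ≤ N') :
    bset A L N' ⊆ bset A L N := by
  rintro r ⟨n, m, x₀, h1, h2, h3, h4⟩
  exact ⟨n, m, x₀, by omega, h2, h3, h4⟩

lemma bset_nonempty (A : ℕ → (Euc d →L[ℝ] Euc d)) {L : Set (Euc d)}
    (hL : ∃ x ∈ L, x ≠ 0) (N : ℕ) : (bset A L N).Nonempty := by
  obtain ⟨x, hx, h0⟩ := hL
  exact ⟨lam A (N + 1) 0 x, N + 1, 0, x, by omega, hx, h0, rfl⟩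

lemma bset_bounds (A Ainv : ℕ → (Euc d →L[ℝ] Euc d)) {cA cI : ℝ}
    (hAc : ∀ n, ‖A n‖ ≤ cA) (hIc : ∀ n, ‖Ainv n‖ ≤ cI) (hA1 : 1 ≤ cA) (hI1 : 1 ≤ cI)
    (hinv : ∀ n, Ainv n * A n = 1) (L : Set (Euc d)) (N : ℕ) :
    ∀ r ∈ bset A L N, -Real.log cI ≤ r ∧ r ≤ Real.log cA := by
  rintro r ⟨n, m, x₀, h1, _, h3, rfl⟩
  exact lam_bound A Ainv hAc hIc hA1 hI1 hinv h3 (by omega)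

lemma main_le (A Ainv B Binv T Tinv : ℕ → (Euc d →L[ℝ] Euc d))
    (hA : IsLyapunov A Ainv) (hB : IsLyapunov B Binv) (hT : IsLyapunov T Tinv)
    (heq : ∀ n, B n = Tinv (n + 1) * A n * T n) (L : Set (Euc d)) :
    upperBohl B ((fun x => Tinv 0 x) '' L) ≤ upperBohl A L ∧
    lowerBohl A L ≤ lowerBohl B ((fun x => Tinv 0 x) '' L) := by
  obtain ⟨bA, hbA⟩ := hA.2.2.1
  obtain ⟨bAi, hbAi⟩ := hA.2.2.2
  obtain ⟨bB, hbB⟩ := hB.2.2.1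
  obtain ⟨bBi, hbBi⟩ := hB.2.2.2
  obtain ⟨bT, hbT⟩ := hT.2.2.1
  obtain ⟨bTi, hbTi⟩ := hT.2.2.2
  set cA := max 1 bA with hcA_def
  set cAi := max 1 bAi with hcAi_def
  set cB := max 1 bB with hcB_def
  set cBi := max 1 bBi with hcBi_def
  set cT := max 1 bT with hcT_def
  set cTi := max 1 bTi with hcTi_def
  have hcA : ∀ n, ‖A n‖ ≤ cA := fun n => (hbA (Set.mem_range_self n)).trans (le_max_right _ _)
  have hcAi : ∀ n, ‖Ainv n‖ ≤ cAi := fun n => (hbAi (Set.mem_range_self n)).trans (le_max_right _ _)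
  have hcB : ∀ n, ‖B n‖ ≤ cB := fun n => (hbB (Set.mem_range_self n)).trans (le_max_right _ _)
  have hcBi : ∀ n, ‖Binv n‖ ≤ cBi := fun n => (hbBi (Set.mem_range_self n)).trans (le_max_right _ _)
  have hcT : ∀ n, ‖T n‖ ≤ cT := fun n => (hbT (Set.mem_range_self n)).trans (le_max_right _ _)
  have hcTi : ∀ n, ‖Tinv n‖ ≤ cTi := fun n => (hbTi (Set.mem_range_self n)).trans (le_max_right _ _)
  have hcA1 : (1 : ℝ) ≤ cA := le_max_left _ _
  have hcAi1 : (1 : ℝ) ≤ cAi := le_max_left _ _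
  have hcB1 : (1 : ℝ) ≤ cB := le_max_left _ _
  have hcBi1 : (1 : ℝ) ≤ cBi := le_max_left _ _
  have hcT1 : (1 : ℝ) ≤ cT := le_max_left _ _
  have hcTi1 : (1 : ℝ) ≤ cTi := le_max_left _ _
  have hAid' := hA.2.1
  have hBid' := hB.2.1
  have hTid := hT.1
  have hTid' := hT.2.1
  set M := (fun x => Tinv 0 x) '' L with hM_def
  set c := cT * cTi with hc_def
  have hc1 : (1 : ℝ) ≤ c := by nlinarith
  have hlogc : 0 ≤ Real.log c := Real.log_nonneg hc1
  have hmemB : ∀ {r : ℝ} {N : ℕ}, r ∈ bset B M N →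
      ∃ n m : ℕ, ∃ x₀ : Euc d, N < n - m ∧ x₀ ∈ L ∧ x₀ ≠ 0 ∧ r = lam B n m (Tinv 0 x₀) := by
    rintro r N ⟨n, m, y₀, h1, hy, hy0, rfl⟩
    obtain ⟨x₀, hxL, rfl⟩ := hy
    refine ⟨n, m, x₀, h1, hxL, ?_, rfl⟩
    intro h
    apply hy0
    rw [h]
    exact map_zero (Tinv 0)
  by_cases hL : ∃ x ∈ L, x ≠ 0
  · have hMne : ∃ y ∈ M, y ≠ 0 := by
      obtain ⟨x, hx, h0⟩ := hL
      refine ⟨Tinv 0 x, ⟨x, hx, rfl⟩, ?_⟩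
      intro h
      apply h0
      have hT0 : T 0 (Tinv 0 x) = x := cancel_apply _ _ (hTid 0) x
      rw [← hT0, h, map_zero]
    have hneA : ∀ N, (bset A L N).Nonempty := bset_nonempty A hL
    have hneB : ∀ N, (bset B M N).Nonempty := bset_nonempty B hMne
    have hboundsA := fun N => bset_bounds A Ainv hcA hcAi hcA1 hcAi1 hAid' L N
    have hboundsB := fun N => bset_bounds B Binv hcB hcBi hcB1 hcBi1 hBid' M N
    have hbddA_above : ∀ N, BddAbove (bset A L N) :=
      fun N => ⟨Real.log cA, fun r hr => (hboundsA N r hr).2⟩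
    have hbddA_below : ∀ N, BddBelow (bset A L N) :=
      fun N => ⟨-Real.log cAi, fun r hr => (hboundsA N r hr).1⟩
    have hbddB_above : ∀ N, BddAbove (bset B M N) :=
      fun N => ⟨Real.log cB, fun r hr => (hboundsB N r hr).2⟩
    have hbddB_below : ∀ N, BddBelow (bset B M N) :=
      fun N => ⟨-Real.log cBi, fun r hr => (hboundsB N r hr).1⟩
    have hrange_below : BddBelow (Set.range fun N : ℕ => sSup (bset B M N)) := by
      refine ⟨-Real.log cBi, ?_⟩
      rintro x ⟨N, rfl⟩
      obtain ⟨r, hr⟩ := hneB N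
      exact le_trans (hboundsB N r hr).1 (le_csSup (hbddB_above N) hr)
    have hrange_above : BddAbove (Set.range fun N : ℕ => sInf (bset B M N)) := by
      refine ⟨Real.log cB, ?_⟩
      rintro x ⟨N, rfl⟩
      obtain ⟨r, hr⟩ := hneB N
      exact le_trans (csInf_le (hbddB_below N) hr) (hboundsB N r hr).2
    have hNrge : ∀ (N n m : ℕ), N < n - m → (N : ℝ) + 1 ≤ (n : ℝ) - (m : ℝ) := by
      intro N n m h
      have h2 : N + 1 + m ≤ n := by omega
      have h3 : ((N : ℝ) + 1) + (m : ℝ) ≤ (n : ℝ) := by exact_mod_cast h2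
      linarith
    have hsup : ∀ N : ℕ, sSup (bset B M N) ≤ sSup (bset A L N) + Real.log c / ((N : ℝ) + 1) := by
      intro N
      apply csSup_le (hneB N)
      intro r hr
      obtain ⟨n, m, x₀, h1, hxL, hx0, rfl⟩ := hmemB hr
      have hmn : m < n := by omega
      have hcomp := (lam_compare A Ainv B Binv T Tinv hAid' hBid' hTid hTid' hcT hcTi
        (by linarith) (by linarith) heq hx0 hmn).2
      have hA_mem : lam A n m x₀ ∈ bset A L N := ⟨n, m, x₀, h1, hxL, hx0, rfl⟩
      have hdle : Real.log c / ((n : ℝ) - (m : ℝ)) ≤ Real.log c / ((N : ℝ) + 1) := by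
        apply div_le_div_of_nonneg_left hlogc (by positivity) (hNrge N n m h1)
      calc lam B n m (Tinv 0 x₀) ≤ lam A n m x₀ + Real.log c / ((n : ℝ) - (m : ℝ)) := hcomp
        _ ≤ sSup (bset A L N) + Real.log c / ((N : ℝ) + 1) :=
            add_le_add (le_csSup (hbddA_above N) hA_mem) hdle
    have hinf : ∀ N : ℕ, sInf (bset A L N) - Real.log c / ((N : ℝ) + 1) ≤ sInf (bset B M N) := by
      intro N
      apply le_csInf (hneB N)
      intro r hr
      obtain ⟨n, m, x₀, h1, hxL, hx0, rfl⟩ := hmemB hr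
      have hmn : m < n := by omega
      have hcomp := (lam_compare A Ainv B Binv T Tinv hAid' hBid' hTid hTid' hcT hcTi
        (by linarith) (by linarith) heq hx0 hmn).1
      have hA_mem : lam A n m x₀ ∈ bset A L N := ⟨n, m, x₀, h1, hxL, hx0, rfl⟩
      have hdle : Real.log c / ((n : ℝ) - (m : ℝ)) ≤ Real.log c / ((N : ℝ) + 1) := by
        apply div_le_div_of_nonneg_left hlogc (by positivity) (hNrge N n m h1)
      have hle := csInf_le (hbddA_below N) hA_mem
      linarith
    have hδ : ∀ ε : ℝ, 0 < ε → ∃ N₁ : ℕ, ∀ N : ℕ, N₁ ≤ N →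
        Real.log c / ((N : ℝ) + 1) ≤ ε / 2 := by
      intro ε hε
      obtain ⟨N₁, hN₁⟩ := exists_nat_gt (Real.log c / (ε / 2))
      refine ⟨N₁, fun N hN => ?_⟩
      have hNR : (N₁ : ℝ) ≤ (N : ℝ) := by exact_mod_cast hN
      rw [div_le_iff₀ (by positivity : (0 : ℝ) < (N : ℝ) + 1)]
      rw [div_lt_iff₀ (by linarith : (0 : ℝ) < ε / 2)] at hN₁
      nlinarith
    constructor
    · apply le_of_forall_pos_le_add
      intro ε hε
      have h0 : (⨅ N : ℕ, sSup (bset A L N)) < upperBohl A L + ε / 2 := by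
        rw [← upperBohl_eq]; linarith
      obtain ⟨N₀, hN₀⟩ := exists_lt_of_ciInf_lt h0
      obtain ⟨N₁, hN₁⟩ := hδ ε hε
      set N := max N₀ N₁ with hN_def
      have hmono : sSup (bset A L N) ≤ sSup (bset A L N₀) :=
        csSup_le_csSup (hbddA_above N₀) (hneA N) (bset_anti A L (le_max_left _ _))
      calc upperBohl B M ≤ sSup (bset B M N) := by
            rw [upperBohl_eq]; exact ciInf_le hrange_below N
        _ ≤ sSup (bset A L N) + Real.log c / ((N : ℝ) + 1) := hsup N
        _ ≤ sSup (bset A L N₀) + ε / 2 := add_le_add hmono (hN₁ N (le_max_right _ _))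
        _ ≤ upperBohl A L + ε := by linarith
    · apply le_of_forall_pos_le_add
      intro ε hε
      have h0 : lowerBohl A L - ε / 2 < ⨆ N : ℕ, sInf (bset A L N) := by
        rw [← lowerBohl_eq]; linarith
      obtain ⟨N₀, hN₀⟩ := exists_lt_of_lt_ciSup h0
      obtain ⟨N₁, hN₁⟩ := hδ ε hε
      set N := max N₀ N₁ with hN_def
      have hmono : sInf (bset A L N₀) ≤ sInf (bset A L N) :=
        csInf_le_csInf (hbddA_below N₀) (hneA N) (bset_anti A L (le_max_left _ _))
      have hle : sInf (bset B M N) ≤ lowerBohl B M := by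
        rw [lowerBohl_eq]; exact le_ciSup hrange_above N
      have := hinf N
      have := hN₁ N (le_max_right _ _)
      linarith
  · have hSA : ∀ N, bset A L N = ∅ := by
      intro N
      apply Set.eq_empty_iff_forall_notMem.mpr
      rintro r ⟨n, m, x₀, _, h2, h3, _⟩
      exact hL ⟨x₀, h2, h3⟩
    have hSB : ∀ N, bset B M N = ∅ := by
      intro N
      apply Set.eq_empty_iff_forall_notMem.mpr
      intro r hr
      obtain ⟨n, m, x₀, _, h2, h3, _⟩ := hmemB hr
      exact hL ⟨x₀, h2, h3⟩
    have e1 : upperBohl A L = 0 := by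
      rw [upperBohl_eq]
      simp only [hSA, Real.sSup_empty]
      exact ciInf_const
    have e2 : upperBohl B M = 0 := by
      rw [upperBohl_eq]
      simp only [hSB, Real.sSup_empty]
      exact ciInf_const
    have e3 : lowerBohl A L = 0 := by
      rw [lowerBohl_eq]
      simp only [hSA, Real.sInf_empty]
      exact ciSup_const
    have e4 : lowerBohl B M = 0 := by
      rw [lowerBohl_eq]
      simp only [hSB, Real.sInf_empty]
      exact ciSup_const
    rw [e1, e2, e3, e4]
    exact ⟨le_refl _, le_refl _⟩

end Stmt19

theorem stmt19 {d : ℕ} (A Ainv B Binv T Tinv : ℕ → (Euc d →L[ℝ] Euc d))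
    (hA : IsLyapunov A Ainv) (hB : IsLyapunov B Binv) (hT : IsLyapunov T Tinv)
    (heq : ∀ n, B n = Tinv (n + 1) * A n * T n)
    (L : Submodule ℝ (Euc d)) :
    upperBohl A (L : Set (Euc d)) = upperBohl B ((fun x => Tinv 0 x) '' (L : Set (Euc d))) ∧
    lowerBohl A (L : Set (Euc d)) = lowerBohl B ((fun x => Tinv 0 x) '' (L : Set (Euc d))) := by
  have h1 := Stmt19.main_le A Ainv B Binv T Tinv hA hB hT heq (L : Set (Euc d))
  have hT' : IsLyapunov Tinv T := ⟨hT.2.1, hT.1, hT.2.2.2, hT.2.2.1⟩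
  have heq' : ∀ n, A n = T (n + 1) * B n * Tinv n := by
    intro n
    rw [heq n]
    simp only [← mul_assoc]
    rw [hT.1 (n + 1), one_mul, mul_assoc, hT.1 n, mul_one]
  have h2 := Stmt19.main_le B Binv A Ainv Tinv T hB hA hT' heq'
    ((fun x => Tinv 0 x) '' (L : Set (Euc d)))
  have himg : (fun x => T 0 x) '' ((fun x => Tinv 0 x) '' (L : Set (Euc d))) = (L : Set (Euc d)) := by
    rw [← Set.image_comp]
    have hcomp : (fun x : Euc d => T 0 x) ∘ (fun x : Euc d => Tinv 0 x) = id := by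
      funext x
      show T 0 (Tinv 0 x) = x
      exact Stmt19.cancel_apply _ _ (hT.1 0) x
    rw [hcomp, Set.image_id]
  rw [himg] at h2
  exact ⟨le_antisymm h2.1 h1.1, le_antisymm h1.2 h2.2⟩
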